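/- arXiv:2212.03540 — 2 statements merged into one kernel-verified Lean document; each statement's English description precedes it below -/
import Mathlib

section
/- Define the EASpace action value iteration operator on Q : S × M → ℝ, where M = {m^i(τ)} is a finite set of macro actions each with a duration τ ≥ 1 and lower-level action a = π^i(s): (HQ)(s, m^i(τ)) = ∑_{s'} P(s'|s,a)(r + γ max_m Q(s',m)) if τ = 1, and (HQ)(s, m^i(τ)) = ∑_{s'} P(s'|s,a)(r + γ Q(s', m^i(τ−1))) if τ > 1. Then H is a γ-contraction with respect to the supremum norm: ‖HQ_j − HQ_k‖_∞ ≤ γ‖Q_j − Q_k‖_∞ for all Q_j, Q_k. -/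
/-- The EASpace action value iteration operator is a `γ`-contraction in the sup norm. -/
theorem stmt3 {S M : Type*} [Fintype S] [Fintype M] [Nonempty S] [Nonempty M]
    (dur : M → ℕ) (hdur : ∀ m, 1 ≤ dur m) (succ : M → M)
    (P : S → M → S → ℝ) (hP0 : ∀ s m s', 0 ≤ P s m s') (hP1 : ∀ s m, ∑ s', P s m s' = 1)
    (r : S → M → S → ℝ) (γ : ℝ) (hγ : γ ∈ Set.Ioo (0 : ℝ) 1)
    (H : ((S × M) → ℝ) → (S × M) → ℝ)
    (hH : ∀ (Q : (S × M) → ℝ) (s : S) (m : M),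
      H Q (s, m) =
        if dur m = 1 then
          ∑ s', P s m s' * (r s m s' +
            γ * Finset.univ.sup' Finset.univ_nonempty (fun m' => Q (s', m')))
        else
          ∑ s', P s m s' * (r s m s' + γ * Q (s', succ m)))
    (Qj Qk : (S × M) → ℝ) :
    Finset.univ.sup' Finset.univ_nonempty (fun p : S × M => |H Qj p - H Qk p|) ≤
      γ * Finset.univ.sup' Finset.univ_nonempty (fun p : S × M => |Qj p - Qk p|) := by
  obtain ⟨hγ0, hγ1⟩ := hγ
  set K := Finset.univ.sup' Finset.univ_nonempty (fun p : S × M => |Qj p - Qk p|) with hKdef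
  have hKp : ∀ (s : S) (m : M), |Qj (s, m) - Qk (s, m)| ≤ K := fun s m =>
    Finset.le_sup' (fun p : S × M => |Qj p - Qk p|) (Finset.mem_univ (s, m))
  have sup_lem : ∀ f g : M → ℝ, (∀ m', |f m' - g m'| ≤ K) →
      Finset.univ.sup' Finset.univ_nonempty f - Finset.univ.sup' Finset.univ_nonempty g ≤ K := by
    intro f g h
    rw [sub_le_iff_le_add]
    apply Finset.sup'_le
    intro m' _
    have h1 := (abs_sub_le_iff.mp (h m')).1
    have h2 : g m' ≤ Finset.univ.sup' Finset.univ_nonempty g :=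
      Finset.le_sup' _ (Finset.mem_univ m')
    linarith
  have sup_abs : ∀ f g : M → ℝ, (∀ m', |f m' - g m'| ≤ K) →
      |Finset.univ.sup' Finset.univ_nonempty f - Finset.univ.sup' Finset.univ_nonempty g| ≤ K := by
    intro f g h
    rw [abs_sub_le_iff]
    exact ⟨sup_lem f g h, sup_lem g f (fun m' => by rw [abs_sub_comm]; exact h m')⟩
  apply Finset.sup'_le
  rintro ⟨s, m⟩ -
  rw [hH, hH]
  by_cases hd : dur m = 1
  · simp only [hd, if_true, if_pos]
    rw [← Finset.sum_sub_distrib]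
    calc |∑ s', (P s m s' * (r s m s' + γ * Finset.univ.sup' Finset.univ_nonempty (fun m' => Qj (s', m'))) -
            P s m s' * (r s m s' + γ * Finset.univ.sup' Finset.univ_nonempty (fun m' => Qk (s', m'))))|
        ≤ ∑ s', |P s m s' * (r s m s' + γ * Finset.univ.sup' Finset.univ_nonempty (fun m' => Qj (s', m'))) -
            P s m s' * (r s m s' + γ * Finset.univ.sup' Finset.univ_nonempty (fun m' => Qk (s', m')))| :=
          Finset.abs_sum_le_sum_abs _ _
      _ ≤ ∑ s', P s m s' * (γ * K) := by
          apply Finset.sum_le_sum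
          intro s' _
          have heq : P s m s' * (r s m s' + γ * Finset.univ.sup' Finset.univ_nonempty (fun m' => Qj (s', m'))) -
              P s m s' * (r s m s' + γ * Finset.univ.sup' Finset.univ_nonempty (fun m' => Qk (s', m'))) =
              P s m s' * (γ * (Finset.univ.sup' Finset.univ_nonempty (fun m' => Qj (s', m')) -
                Finset.univ.sup' Finset.univ_nonempty (fun m' => Qk (s', m')))) := by ring
          rw [heq, abs_mul, abs_mul, abs_of_nonneg (hP0 s m s'), abs_of_nonneg hγ0.le]
          have := sup_abs (fun m' => Qj (s', m')) (fun m' => Qk (s', m')) (fun m' => hKp s' m')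
          have hP := hP0 s m s'
          exact mul_le_mul_of_nonneg_left (mul_le_mul_of_nonneg_left this hγ0.le) hP
      _ = γ * K := by rw [← Finset.sum_mul, hP1, one_mul]
  · simp only [hd, if_false, if_neg]
    rw [← Finset.sum_sub_distrib]
    calc |∑ s', (P s m s' * (r s m s' + γ * Qj (s', succ m)) -
            P s m s' * (r s m s' + γ * Qk (s', succ m)))|
        ≤ ∑ s', |P s m s' * (r s m s' + γ * Qj (s', succ m)) -
            P s m s' * (r s m s' + γ * Qk (s', succ m))| := Finset.abs_sum_le_sum_abs _ _
      _ ≤ ∑ s', P s m s' * (γ * K) := by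
          apply Finset.sum_le_sum
          intro s' _
          have heq : P s m s' * (r s m s' + γ * Qj (s', succ m)) -
              P s m s' * (r s m s' + γ * Qk (s', succ m)) =
              P s m s' * (γ * (Qj (s', succ m) - Qk (s', succ m))) := by ring
          rw [heq, abs_mul, abs_mul, abs_of_nonneg (hP0 s m s'), abs_of_nonneg hγ0.le]
          have := hKp s' (succ m)
          have hP := hP0 s m s'
          exact mul_le_mul_of_nonneg_left (mul_le_mul_of_nonneg_left this hγ0.le) hP
      _ = γ * K := by rw [← Finset.sum_mul, hP1, one_mul]
end

section
/- Let Δ_{n+1} = (1 − α_n)Δ_n + α_n F_n, where Δ_n, F_n ≥ 0 are real, α_n ∈ [0,1], and suppose F_n ≤ γ Δ_n + ε for all n, with γ ∈ (0,1), ε ≥ 0, and ∑_n α_n = ∞. Then limsup_n Δ_n ≤ ε/(1 − γ). -/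
theorem stmt12 (γ ε : ℝ) (hγ : γ ∈ Set.Ioo (0 : ℝ) 1) (hε : 0 ≤ ε)
    (α : ℕ → ℝ) (hα : ∀ n, α n ∈ Set.Icc (0 : ℝ) 1)
    (hdiv : Filter.Tendsto (fun N => ∑ n ∈ Finset.range N, α n) Filter.atTop Filter.atTop)
    (Δ F : ℕ → ℝ) (hΔ : ∀ n, 0 ≤ Δ n) (hF : ∀ n, 0 ≤ F n)
    (hrec : ∀ n, Δ (n + 1) = (1 - α n) * Δ n + α n * F n)
    (hFB : ∀ n, F n ≤ γ * Δ n + ε) :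
    Filter.limsup Δ Filter.atTop ≤ ε / (1 - γ) := by
  obtain ⟨hγ0, hγ1⟩ := hγ
  have hc : (0:ℝ) < 1 - γ := by linarith
  set L : ℝ := ε / (1 - γ) with hLdef
  have hcL : (1 - γ) * L = ε := by
    rw [hLdef]; field_simp
  have hL : 0 ≤ L := div_nonneg hε hc.le
  set g : ℕ → ℝ := fun n => max (Δ n - L) 0 with hg
  have hgnn : ∀ n, 0 ≤ g n := fun n => le_max_right _ _
  have hfac : ∀ n, 0 ≤ 1 - (1 - γ) * α n := by
    intro n
    have h1 : (1 - γ) * α n ≤ 1 * 1 :=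
      mul_le_mul (by linarith) (hα n).2 (hα n).1 (by norm_num)
    linarith
  have hstep : ∀ n, g (n + 1) ≤ (1 - (1 - γ) * α n) * g n := by
    intro n
    have hα0 := (hα n).1
    have h2 : Δ (n + 1) - L ≤ (1 - (1 - γ) * α n) * (Δ n - L) := by
      have h3 := mul_le_mul_of_nonneg_left (hFB n) hα0
      have := hrec n
      nlinarith [hcL]
    refine max_le ?_ (mul_nonneg (hfac n) (hgnn n))
    calc Δ (n + 1) - L ≤ (1 - (1 - γ) * α n) * (Δ n - L) := h2
      _ ≤ (1 - (1 - γ) * α n) * g n :=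
        mul_le_mul_of_nonneg_left (le_max_left _ _) (hfac n)
  have hprod : ∀ n, g n ≤ g 0 * ∏ k ∈ Finset.range n, (1 - (1 - γ) * α k) := by
    intro n
    induction n with
    | zero => simp
    | succ n ih =>
      calc g (n + 1) ≤ (1 - (1 - γ) * α n) * g n := hstep n
        _ ≤ (1 - (1 - γ) * α n) * (g 0 * ∏ k ∈ Finset.range n, (1 - (1 - γ) * α k)) :=
          mul_le_mul_of_nonneg_left ih (hfac n)
        _ = g 0 * ∏ k ∈ Finset.range (n + 1), (1 - (1 - γ) * α k) := by
          rw [Finset.prod_range_succ]; ring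
  have hexp : ∀ n, (∏ k ∈ Finset.range n, (1 - (1 - γ) * α k))
      ≤ Real.exp (-((1 - γ) * ∑ k ∈ Finset.range n, α k)) := by
    intro n
    calc (∏ k ∈ Finset.range n, (1 - (1 - γ) * α k))
        ≤ ∏ k ∈ Finset.range n, Real.exp (-((1 - γ) * α k)) := by
          apply Finset.prod_le_prod (fun k _ => hfac k)
          intro k _
          have := Real.add_one_le_exp (-((1 - γ) * α k))
          linarith
      _ = Real.exp (∑ k ∈ Finset.range n, -((1 - γ) * α k)) := (Real.exp_sum _ _).symm
      _ = Real.exp (-((1 - γ) * ∑ k ∈ Finset.range n, α k)) := by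
          rw [Finset.mul_sum, ← Finset.sum_neg_distrib]
  have htend : Filter.Tendsto
      (fun n => g 0 * Real.exp (-((1 - γ) * ∑ k ∈ Finset.range n, α k)))
      Filter.atTop (nhds (g 0 * 0)) := by
    apply Filter.Tendsto.const_mul
    apply Real.tendsto_exp_atBot.comp
    apply Filter.tendsto_neg_atTop_atBot.comp
    exact hdiv.const_mul_atTop hc
  rw [mul_zero] at htend
  refine le_of_forall_pos_le_add ?_
  intro δ hδ
  have hev : ∀ᶠ n in Filter.atTop,
      g 0 * Real.exp (-((1 - γ) * ∑ k ∈ Finset.range n, α k)) < δ :=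
    htend.eventually_lt_const hδ
  refine Filter.limsup_le_of_le
    (Filter.isCoboundedUnder_le_of_le Filter.atTop (x := 0) hΔ) ?_
  filter_upwards [hev] with n hn
  have h1 : Δ n ≤ L + g n := by
    have := le_max_left (Δ n - L) 0
    simp only [hg]; linarith [le_max_left (Δ n - L) 0]
  have h2 : g n ≤ g 0 * Real.exp (-((1 - γ) * ∑ k ∈ Finset.range n, α k)) :=
    (hprod n).trans (mul_le_mul_of_nonneg_left (hexp n) (hgnn 0))
  linarith
end
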